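/- The open interval (0,1) with p* = 1 − p, p • q = p·q, and p ∘ q = p(1−q)/(1−pq) is a symmetric tricocycloid: it satisfies p** = p, the pentagon equations (p•(q•r) = (p•q)•r, (p•q)∘r = (p∘(q•r))•(q∘r), p∘q = (p∘(q•r))∘(q∘r)), the hexagon equations ((p•q)*•(p∘q) = p•q*, (p•q)*∘(p∘q) = (p∘q*)*), and the map (p,q) ↦ (p•q, p∘q) is a bijection of (0,1)² onto itself. -/

import Mathlib

open Set

lemma aux_pos (p q : ℝ) (hp : p ∈ Ioo (0:ℝ) 1) (hq : q ∈ Ioo (0:ℝ) 1) :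
    0 < 1 - p * q := by
  obtain ⟨hp0, hp1⟩ := hp; obtain ⟨hq0, hq1⟩ := hq
  nlinarith

lemma aux_mul (p q : ℝ) (hp : p ∈ Ioo (0:ℝ) 1) (hq : q ∈ Ioo (0:ℝ) 1) :
    p * q ∈ Ioo (0:ℝ) 1 := by
  obtain ⟨hp0, hp1⟩ := hp; obtain ⟨hq0, hq1⟩ := hq
  constructor
  · positivity
  · nlinarith

lemma aux_circ (p q : ℝ) (hp : p ∈ Ioo (0:ℝ) 1) (hq : q ∈ Ioo (0:ℝ) 1) :
    p * (1 - q) / (1 - p * q) ∈ Ioo (0:ℝ) 1 := by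
  have h := aux_pos p q hp hq
  obtain ⟨hp0, hp1⟩ := hp; obtain ⟨hq0, hq1⟩ := hq
  constructor
  · have : 0 < 1 - q := by linarith
    positivity
  · rw [div_lt_one h]; nlinarith

/-- The open interval (0,1) with `p* = 1 - p`, `p • q = p*q`, and
`p ∘ q = p(1-q)/(1-pq)` is a symmetric tricocycloid: involution, pentagon and
hexagon equations hold, and `(p,q) ↦ (p•q, p∘q)` is a bijection of `(0,1)²`. -/
theorem interval_symmetric_tricocycloid :
    (∀ p ∈ Ioo (0:ℝ) 1, ∀ q ∈ Ioo (0:ℝ) 1, p * q ∈ Ioo (0:ℝ) 1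
        ∧ p * (1 - q) / (1 - p * q) ∈ Ioo (0:ℝ) 1 ∧ 1 - p ∈ Ioo (0:ℝ) 1)
    ∧ (∀ p ∈ Ioo (0:ℝ) 1, 1 - (1 - p) = p)
    -- pentagon equations
    ∧ (∀ p ∈ Ioo (0:ℝ) 1, ∀ q ∈ Ioo (0:ℝ) 1, ∀ r ∈ Ioo (0:ℝ) 1,
        p * (q * r) = (p * q) * r)
    ∧ (∀ p ∈ Ioo (0:ℝ) 1, ∀ q ∈ Ioo (0:ℝ) 1, ∀ r ∈ Ioo (0:ℝ) 1,
        (p * q) * (1 - r) / (1 - (p * q) * r)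
          = (p * (1 - q * r) / (1 - p * (q * r)))
              * (q * (1 - r) / (1 - q * r)))
    ∧ (∀ p ∈ Ioo (0:ℝ) 1, ∀ q ∈ Ioo (0:ℝ) 1, ∀ r ∈ Ioo (0:ℝ) 1,
        p * (1 - q) / (1 - p * q)
          = (p * (1 - q * r) / (1 - p * (q * r)))
              * (1 - (q * (1 - r) / (1 - q * r)))
              / (1 - (p * (1 - q * r) / (1 - p * (q * r)))
                  * (q * (1 - r) / (1 - q * r))))
    -- hexagon equations
    ∧ (∀ p ∈ Ioo (0:ℝ) 1, ∀ q ∈ Ioo (0:ℝ) 1,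
        (1 - p * q) * (p * (1 - q) / (1 - p * q)) = p * (1 - q))
    ∧ (∀ p ∈ Ioo (0:ℝ) 1, ∀ q ∈ Ioo (0:ℝ) 1,
        (1 - p * q) * (1 - (p * (1 - q) / (1 - p * q)))
            / (1 - (1 - p * q) * (p * (1 - q) / (1 - p * q)))
          = 1 - (p * (1 - (1 - q)) / (1 - p * (1 - q))))
    -- joint bijectivity of the associators
    ∧ (∀ a ∈ Ioo (0:ℝ) 1, ∀ b ∈ Ioo (0:ℝ) 1,
        ∃! pq : ℝ × ℝ, pq.1 ∈ Ioo (0:ℝ) 1 ∧ pq.2 ∈ Ioo (0:ℝ) 1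
          ∧ pq.1 * pq.2 = a ∧ pq.1 * (1 - pq.2) / (1 - pq.1 * pq.2) = b) := by
  refine ⟨?_, ?_, ?_, ?_, ?_, ?_, ?_, ?_⟩
  · intro p hp q hq
    refine ⟨aux_mul p q hp hq, aux_circ p q hp hq, ?_, ?_⟩
    · linarith [hp.2]
    · linarith [hp.1]
  · intro p _; ring
  · intro p _ q _ r _; ring
  · intro p hp q hq r hr
    have h1 := aux_pos (p*q) r (aux_mul p q hp hq) hr
    have h2 := aux_pos p (q*r) hp (aux_mul q r hq hr)
    have h3 := aux_pos q r hq hr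
    field_simp
  · intro p hp q hq r hr
    have h2 := aux_pos p (q*r) hp (aux_mul q r hq hr)
    have h3 := aux_pos q r hq hr
    have h4 := aux_pos p q hp hq
    have h2' : 1 - p * q * r ≠ 0 := by rw [mul_assoc]; exact ne_of_gt h2
    have key : 1 - (p * (1 - q * r) / (1 - p * (q * r)))
                  * (q * (1 - r) / (1 - q * r))
        = (1 - p * q) / (1 - p * (q * r)) := by
      field_simp
      ring
    rw [key]
    rw [div_div_eq_mul_div]
    field_simp
    ring
  · intro p hp q hq
    have h := aux_pos p q hp hq
    field_simp
  · intro p hp q hq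
    have h := aux_pos p q hp hq
    have h2 : 0 < 1 - p * (1 - q) := by nlinarith [hp.1, hp.2, hq.1, hq.2]
    have h3 : (1 - p * q) * (p * (1 - q) / (1 - p * q)) = p * (1 - q) := by
      field_simp
    rw [h3]
    field_simp
    ring
  · intro a ha b hb
    have hP : 0 < a + b * (1 - a) := by nlinarith [ha.1, ha.2, hb.1, hb.2]
    have hP1 : a + b * (1 - a) < 1 := by nlinarith [ha.1, ha.2, hb.1, hb.2]
    have haP : a < a + b * (1 - a) := by nlinarith [ha.1, ha.2, hb.1, hb.2]
    have h1a : (0:ℝ) < 1 - a := by linarith [ha.2]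
    refine ⟨(a + b * (1 - a), a / (a + b * (1 - a))), ?_, ?_⟩
    · refine ⟨⟨hP, hP1⟩, ⟨div_pos ha.1 hP, by rw [div_lt_one hP]; linarith⟩, ?_, ?_⟩
      · field_simp
      · have hPa : (a + b * (1 - a)) * (a / (a + b * (1 - a))) = a := by
          field_simp
        rw [hPa]
        have hnum : (a + b * (1 - a)) * (1 - a / (a + b * (1 - a)))
            = b * (1 - a) := by
          field_simp
          ring
        rw [hnum]
        rw [mul_div_assoc, div_self (ne_of_gt h1a), mul_one]
    · rintro ⟨p, q⟩ ⟨hp, hq, hpq, hcirc⟩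
      simp only at hpq hcirc ⊢
      have h := aux_pos p q hp hq
      rw [hpq] at hcirc h
      rw [div_eq_iff (ne_of_gt h)] at hcirc
      have hpval : p = a + b * (1 - a) := by linear_combination hcirc + hpq
      have hp0 : p ≠ 0 := ne_of_gt hp.1
      have hqval : q = a / (a + b * (1 - a)) := by
        rw [← hpval, eq_div_iff hp0, mul_comm, hpq]
      rw [Prod.ext_iff]
      exact ⟨hpval, hqval⟩
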